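/- Let (M,d) be a proper metric space that is not compact, and assume M is a geodesic space (any two points are joined by a minimizing geodesic). Then for every p ∈ M there exists a ray c : ℝ≥0 → M with c(0) = p. -/
import Mathlib


open Filter Metric Topology

/-- part of Proposition 2.4: a proper, non-compact geodesic metric space
carries a geodesic ray starting at every point. -/
theorem exists_ray_of_noncompact {M : Type*} [MetricSpace M] [ProperSpace M]
    [NoncompactSpace M]
    (hgeo : ∀ x y : M, ∃ γ : ℝ → M, γ 0 = x ∧ γ (dist x y) = y ∧
      ∀ s ∈ Set.Icc (0 : ℝ) (dist x y), ∀ t ∈ Set.Icc (0 : ℝ) (dist x y),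
        dist (γ s) (γ t) = |s - t|) :
    ∀ p : M, ∃ c : ℝ → M, c 0 = p ∧
      ∀ s t : ℝ, 0 ≤ s → 0 ≤ t → dist (c s) (c t) = |s - t| := by
  intro p
  -- choose points far away
  have hx : ∀ n : ℕ, ∃ x : M, (n : ℝ) < dist p x := by
    intro n
    by_contra h
    push_neg at h
    have : Metric.closedBall p n = Set.univ := by
      ext x; simp [Metric.mem_closedBall, dist_comm, h x]
    have : CompactSpace M := by
      constructor
      rw [← this]
      exact isCompact_closedBall p n
    exact (not_compactSpace_iff.mpr ‹NoncompactSpace M›) this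
  choose x hxn using hx
  set D : ℕ → ℝ := fun n => dist p (x n) with hD
  have hD0 : ∀ n, 0 ≤ D n := fun n => dist_nonneg
  choose γ hγ0 hγend hγiso using fun n => hgeo p (x n)
  -- extended geodesics
  set g : ℕ → ℝ → M := fun n t => γ n (max 0 (min t (D n))) with hg
  have hmem : ∀ n t, max 0 (min t (D n)) ∈ Set.Icc (0 : ℝ) (D n) := by
    intro n t
    constructor
    · exact le_max_left _ _
    · exact max_le (hD0 n) (min_le_right _ _)
  have hgval : ∀ n t, 0 ≤ t → t ≤ D n → g n t = γ n t := by
    intro n t ht htD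
    simp only [hg]
    rw [min_eq_left htD, max_eq_right ht]
  have hdistp : ∀ n t, dist p (g n t) ≤ |t| := by
    intro n t
    have h0 : (0:ℝ) ∈ Set.Icc (0:ℝ) (D n) := ⟨le_rfl, hD0 n⟩
    have := hγiso n 0 h0 _ (hmem n t)
    rw [← hγ0 n] at *
    calc dist (γ n 0) (g n t) = |0 - max 0 (min t (D n))| := this
      _ = max 0 (min t (D n)) := by
          rw [zero_sub, abs_neg, abs_of_nonneg (le_max_left _ _)]
      _ ≤ |t| := max_le (abs_nonneg t) ((min_le_left _ _).trans (le_abs_self t))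
  -- ultrafilter limit
  let U : Ultrafilter ℕ := hyperfilter ℕ
  have hUc : (U : Filter ℕ) ≤ cofinite := hyperfilter_le_cofinite
  have hlim : ∀ t : ℝ, ∃ y ∈ Metric.closedBall p |t|,
      (U.map (fun n => g n t) : Filter M) ≤ 𝓝 y := by
    intro t
    apply (isCompact_closedBall p |t|).ultrafilter_le_nhds (U.map (fun n => g n t))
    simp only [Filter.le_principal_iff, Ultrafilter.mem_coe, Ultrafilter.mem_map]
    exact Filter.univ_mem' (fun n => by simpa [Metric.mem_closedBall, dist_comm] using hdistp n t)
  choose c hcball hclim using hlim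
  have hDbig : ∀ r : ℝ, ∀ᶠ n in (U : Filter ℕ), r ≤ D n := by
    intro r
    apply hUc
    rw [Nat.cofinite_eq_atTop]
    filter_upwards [Filter.eventually_ge_atTop ⌈r⌉₊] with n hn
    have h1 : (⌈r⌉₊ : ℝ) ≤ n := Nat.cast_le.mpr hn
    have h2 := Nat.le_ceil r
    have h3 := hxn n
    simp only [hD]
    linarith
  have htend : ∀ t : ℝ, Filter.Tendsto (fun n => g n t) (U : Filter ℕ) (𝓝 (c t)) := by
    intro t
    exact hclim t
  refine ⟨c, ?_, ?_⟩
  · -- c 0 = p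
    have h1 : Filter.Tendsto (fun n => g n 0) (U : Filter ℕ) (𝓝 p) := by
      have : (fun n => g n 0) = fun _ => p := by
        funext n
        rw [hgval n 0 le_rfl (hD0 n), hγ0 n]
      rw [this]
      exact tendsto_const_nhds
    exact tendsto_nhds_unique (htend 0) h1
  · intro s t hs ht
    have hd : Filter.Tendsto (fun n => dist (g n s) (g n t)) (U : Filter ℕ)
        (𝓝 (dist (c s) (c t))) := (htend s).dist (htend t)
    have he : ∀ᶠ n in (U : Filter ℕ), dist (g n s) (g n t) = |s - t| := by
      filter_upwards [hDbig (max s t)] with n hn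
      have hsD : s ≤ D n := (le_max_left s t).trans hn
      have htD : t ≤ D n := (le_max_right s t).trans hn
      rw [hgval n s hs hsD, hgval n t ht htD]
      exact hγiso n s ⟨hs, hsD⟩ t ⟨ht, htD⟩
    have hd' : Filter.Tendsto (fun n => dist (g n s) (g n t)) (U : Filter ℕ)
        (𝓝 (|s - t|)) := by
      rw [Filter.tendsto_congr' he]
      exact tendsto_const_nhds
    exact tendsto_nhds_unique hd hd'
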